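/- Let G be a k-partite graph with vertex classes V_1,...,V_k, and let K_k(G) denote the number of k-cliques in G. Then e(G) ≥ (k choose 2) · K_k(G)^{2/k}. -/

import Mathlib

open Finset

def pairsF (k : ℕ) : Finset (Fin k × Fin k) := Finset.univ.filter (fun p => p.1 < p.2)

lemma mem_pairsF {k : ℕ} {p : Fin k × Fin k} : p ∈ pairsF k ↔ p.1 < p.2 := by
  simp [pairsF]

lemma card_pairsF (k : ℕ) : (pairsF k).card = k.choose 2 := by
  have : (Finset.powersetCard 2 (Finset.univ : Finset (Fin k))).card = k.choose 2 := by
    rw [Finset.card_powersetCard, Finset.card_univ, Fintype.card_fin]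
  rw [← this]
  apply Finset.card_bij (fun p _ => ({p.1, p.2} : Finset (Fin k)))
  · intro p hp
    rw [mem_pairsF] at hp
    simp [Finset.mem_powersetCard, Finset.card_insert_of_notMem, Finset.mem_singleton, hp.ne]
  · intro p hp q hq h
    rw [mem_pairsF] at hp hq
    have h1 : p.1 ∈ ({q.1, q.2} : Finset (Fin k)) := h ▸ (by simp)
    have h2 : p.2 ∈ ({q.1, q.2} : Finset (Fin k)) := h ▸ (by simp)
    have h3 : q.1 ∈ ({p.1, p.2} : Finset (Fin k)) := h ▸ (by simp)
    have h4 : q.2 ∈ ({p.1, p.2} : Finset (Fin k)) := h ▸ (by simp)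
    simp only [Finset.mem_insert, Finset.mem_singleton] at h1 h2 h3 h4
    have := hp; have := hq
    ext <;> omega
  · intro s hs
    rw [Finset.mem_powersetCard] at hs
    obtain ⟨a, b, hab, rfl⟩ := Finset.card_eq_two.1 hs.2
    rcases lt_or_gt_of_ne hab with h | h
    · exact ⟨(a, b), mem_pairsF.2 h, rfl⟩
    · exact ⟨(b, a), mem_pairsF.2 h, by rw [Finset.pair_comm]⟩

lemma two_mul_choose_two (n : ℕ) : 2 * n.choose 2 = n * (n - 1) := by
  induction n with
  | zero => rfl
  | succ m ih =>
    have h : (m+1).choose 2 = m.choose 1 + m.choose 2 := Nat.choose_succ_succ m 1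
    have h1 : m.choose 1 = m := Nat.choose_one_right m
    rw [h, h1]
    cases m with
    | zero => rfl
    | succ l => rw [Nat.succ_sub_one] at ih ⊢; ring_nf; ring_nf at ih; omega

/-- Uniform Hölder inequality. -/
lemma holder_unif {α ι : Type*} (s : Finset α) (t : Finset ι) (ht : t.Nonempty)
    (g : ι → α → ℝ) (hg : ∀ i ∈ t, ∀ v ∈ s, 0 ≤ g i v) :
    ∑ v ∈ s, ∏ i ∈ t, (g i v) ^ ((1:ℝ)/t.card)
      ≤ ∏ i ∈ t, (∑ v ∈ s, g i v) ^ ((1:ℝ)/t.card) := by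
  have hcard : (0:ℝ) < t.card := by exact_mod_cast ht.card_pos
  have hexp : (0:ℝ) < 1 / t.card := by positivity
  set n : ℝ := ((1:ℝ)/t.card) with hn
  by_cases hzero : ∃ i ∈ t, ∑ v ∈ s, g i v = 0
  · obtain ⟨i, hi, hGi⟩ := hzero
    have hgv : ∀ v ∈ s, g i v = 0 := fun v hv =>
      le_antisymm (by
        have := Finset.sum_le_sum_of_subset_of_nonneg (Finset.singleton_subset_iff.2 hv)
          (fun j hj _ => hg i hi j hj)
        simp only [Finset.sum_singleton] at this
        linarith [this.trans_eq hGi]) (hg i hi v hv)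
    have hL : ∑ v ∈ s, ∏ j ∈ t, (g j v) ^ n = 0 := by
      refine Finset.sum_eq_zero fun v hv => Finset.prod_eq_zero hi ?_
      rw [hgv v hv, Real.zero_rpow (by positivity)]
    have hR : 0 ≤ ∏ i ∈ t, (∑ v ∈ s, g i v) ^ n := by
      refine Finset.prod_nonneg fun j hj => Real.rpow_nonneg ?_ _
      exact Finset.sum_nonneg fun v hv => hg j hj v hv
    rw [hL]; exact hR
  · push_neg at hzero
    have hGpos : ∀ i ∈ t, 0 < ∑ v ∈ s, g i v := fun i hi =>
      lt_of_le_of_ne (Finset.sum_nonneg fun v hv => hg i hi v hv) (Ne.symm (hzero i hi))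
    set G : ι → ℝ := fun i => ∑ v ∈ s, g i v with hG
    have key : ∀ v ∈ s, ∏ i ∈ t, (g i v) ^ n
        ≤ (∑ i ∈ t, n * (g i v / G i)) * ∏ i ∈ t, (G i) ^ n := by
      intro v hv
      have amgm := Real.geom_mean_le_arith_mean_weighted t (fun _ => n)
        (fun i => g i v / G i) (fun i _ => le_of_lt hexp)
        (by rw [Finset.sum_const, nsmul_eq_mul, hn]; field_simp)
        (fun i hi => div_nonneg (hg i hi v hv) (hGpos i hi).le)
      have expand : ∏ i ∈ t, (g i v) ^ n
          = (∏ i ∈ t, (g i v / G i) ^ n) * ∏ i ∈ t, (G i) ^ n := by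
        rw [← Finset.prod_mul_distrib]
        refine Finset.prod_congr rfl fun i hi => ?_
        rw [← Real.mul_rpow (div_nonneg (hg i hi v hv) (hGpos i hi).le) (hGpos i hi).le,
          div_mul_cancel₀ _ (hGpos i hi).ne']
      rw [expand]
      exact mul_le_mul_of_nonneg_right amgm
        (Finset.prod_nonneg fun i hi => Real.rpow_nonneg (hGpos i hi).le _)
    calc ∑ v ∈ s, ∏ i ∈ t, (g i v) ^ n
        ≤ ∑ v ∈ s, (∑ i ∈ t, n * (g i v / G i)) * ∏ i ∈ t, (G i) ^ n :=
          Finset.sum_le_sum key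
      _ = (∑ v ∈ s, ∑ i ∈ t, n * (g i v / G i)) * ∏ i ∈ t, (G i) ^ n := by
          rw [← Finset.sum_mul]
      _ = 1 * ∏ i ∈ t, (G i) ^ n := by
          congr 1
          rw [Finset.sum_comm]
          have : ∀ i ∈ t, ∑ v ∈ s, n * (g i v / G i) = n := by
            intro i hi
            rw [← Finset.mul_sum, ← Finset.sum_div, div_self (hGpos i hi).ne', mul_one]
          rw [Finset.sum_congr rfl this, Finset.sum_const, nsmul_eq_mul, hn]
          field_simp
      _ = ∏ i ∈ t, (G i) ^ n := one_mul _


variable {V : Type} [Fintype V] [DecidableEq V]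

def projF {k : ℕ} (i j : Fin k) (S : Finset (Fin k → V)) : Finset (V × V) :=
  S.image (fun f => (f i, f j))

lemma pairsF_succ_split (k : ℕ) :
    pairsF (k+1) = ((pairsF k).image (fun p => (p.1.castSucc, p.2.castSucc)))
      ∪ (Finset.univ.image (fun i : Fin k => (i.castSucc, Fin.last k))) := by
  ext p
  simp only [mem_pairsF, Finset.mem_union, Finset.mem_image, Finset.mem_univ, true_and,
    Prod.ext_iff]
  constructor
  · intro hlt
    by_cases h2 : p.2 = Fin.last k
    · right
      have h1 : p.1 ≠ Fin.last k := by
        intro h; rw [h, h2] at hlt; exact lt_irrefl _ hlt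
      obtain ⟨i, hi⟩ := Fin.exists_castSucc_eq.2 h1
      exact ⟨i, hi, h2.symm⟩
    · left
      obtain ⟨j, hj⟩ := Fin.exists_castSucc_eq.2 h2
      have h1 : p.1 ≠ Fin.last k := by
        intro h; rw [h, ← hj] at hlt
        exact absurd hlt (not_lt.2 (Fin.castSucc_lt_last j).le)
      obtain ⟨i, hi⟩ := Fin.exists_castSucc_eq.2 h1
      refine ⟨(i, j), ?_, hi, hj⟩
      rw [← Fin.castSucc_lt_castSucc_iff, hi, hj]; exact hlt
  · rintro (⟨q, hq, h1, h2⟩ | ⟨i, h1, h2⟩)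
    · rw [← h1, ← h2, Fin.castSucc_lt_castSucc_iff]; exact hq
    · rw [← h1, ← h2]; exact Fin.castSucc_lt_last i

theorem shearer : ∀ (k : ℕ) (S : Finset (Fin k → V)),
    (S.card : ℝ) ^ (k - 1) ≤ ∏ p ∈ pairsF k, ((projF p.1 p.2 S).card : ℝ) := by
  intro k
  induction k with
  | zero =>
    intro S
    have : pairsF 0 = ∅ := by simp [pairsF]
    simp [this]
  | succ k IH =>
    intro S
    rcases Nat.eq_zero_or_pos k with rfl | hk
    · have : pairsF 1 = ∅ := by decide
      simp [this]
    -- main case, k ≥ 1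
    have hkR : (0:ℝ) < k := by exact_mod_cast hk
    set T : V → Finset (Fin (k+1) → V) :=
      fun v => S.filter (fun f => f (Fin.last k) = v) with hT
    set sl : V → Finset (Fin k → V) :=
      fun v => (T v).image (fun f => f ∘ Fin.castSucc) with hsl
    set A : Fin k → V → ℕ := fun i v => ((T v).image (fun f => f i.castSucc)).card with hA
    set P : ℝ := ∏ p ∈ pairsF k, ((projF p.1.castSucc p.2.castSucc S).card : ℝ) with hPdef
    set B : Fin k → ℕ := fun i => (projF i.castSucc (Fin.last k) S).card with hB
    have hPnonneg : 0 ≤ P := Finset.prod_nonneg fun p _ => Nat.cast_nonneg _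
    -- F1: card splits as sum of fibers
    have F1 : S.card = ∑ v : V, (T v).card :=
      Finset.card_eq_sum_card_fiberwise (fun f _ => Finset.mem_univ (f (Fin.last k)))
    -- F2: slices have the same card as fibers
    have F2 : ∀ v : V, (sl v).card = (T v).card := by
      intro v
      apply Finset.card_image_of_injOn
      intro f hf g hg hfg
      have hf' := Finset.mem_filter.1 hf
      have hg' := Finset.mem_filter.1 hg
      funext i
      refine Fin.lastCases ?_ (fun j => ?_) i
      · rw [hf'.2, hg'.2]
      · exact congrFun hfg j
    -- F3: slice card bounded by product of coordinate images
    have F3 : ∀ v : V, (T v).card ≤ ∏ i : Fin k, A i v := by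
      intro v
      rw [← F2 v]
      have hsub : sl v ⊆ Fintype.piFinset (fun i => (T v).image (fun f => f i.castSucc)) := by
        intro g hg
        simp only [hsl, Finset.mem_image] at hg
        obtain ⟨f, hf, rfl⟩ := hg
        rw [Fintype.mem_piFinset]
        intro i
        exact Finset.mem_image_of_mem _ hf
      calc (sl v).card ≤ _ := Finset.card_le_card hsub
        _ = ∏ i : Fin k, A i v := Fintype.card_piFinset _
    -- F4: induction hypothesis applied to slices
    have F4 : ∀ v : V, ((T v).card : ℝ) ^ (k - 1) ≤ P := by
      intro v
      rw [← F2 v]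
      refine (IH (sl v)).trans ?_
      refine Finset.prod_le_prod (fun p _ => Nat.cast_nonneg _) (fun p _ => ?_)
      have : projF p.1 p.2 (sl v) ⊆ projF p.1.castSucc p.2.castSucc S := by
        intro q hq
        simp only [projF, Finset.mem_image, hsl, hT, Finset.mem_filter] at hq ⊢
        obtain ⟨g, ⟨f, ⟨hfS, _⟩, rfl⟩, rfl⟩ := hq
        exact ⟨f, hfS, rfl⟩
      exact_mod_cast Finset.card_le_card this
    -- F5: B i = ∑ v, A i v
    have F5 : ∀ i : Fin k, B i = ∑ v : V, A i v := by
      intro i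
      have h1 : (projF i.castSucc (Fin.last k) S).card
          = ∑ v : V, ((projF i.castSucc (Fin.last k) S).filter (fun q => q.2 = v)).card :=
        Finset.card_eq_sum_card_fiberwise (fun q _ => Finset.mem_univ q.2)
      show (projF i.castSucc (Fin.last k) S).card = ∑ v : V, A i v
      rw [h1]
      refine Finset.sum_congr rfl fun v _ => ?_
      have heq : (projF i.castSucc (Fin.last k) S).filter (fun q => q.2 = v)
          = ((T v).image (fun f => f i.castSucc)).image (fun u => (u, v)) := by
        ext ⟨a, b⟩
        simp only [projF, hT, Finset.mem_filter, Finset.mem_image, Prod.mk.injEq]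
        aesop
      rw [heq, Finset.card_image_of_injective _ (fun x y h => congrArg Prod.fst h)]
    -- pointwise bound
    have hc : ∀ v : V, ((T v).card : ℝ)
        ≤ P ^ ((1:ℝ)/k) * ∏ i : Fin k, (A i v : ℝ) ^ ((1:ℝ)/k) := by
      intro v
      have hpow : ((T v).card : ℝ) ^ k ≤ P * ∏ i : Fin k, (A i v : ℝ) := by
        have hk1 : k - 1 + 1 = k := Nat.succ_pred_eq_of_pos hk
        calc ((T v).card : ℝ) ^ k = ((T v).card : ℝ) ^ (k-1) * ((T v).card : ℝ) := by
              rw [← pow_succ, hk1]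
          _ ≤ P * ∏ i : Fin k, (A i v : ℝ) := by
              refine mul_le_mul (F4 v) ?_ (Nat.cast_nonneg _) hPnonneg
              exact_mod_cast F3 v
      have h0 : (0:ℝ) ≤ ((T v).card : ℝ) := Nat.cast_nonneg _
      have hkne : (k:ℝ) ≠ 0 := hkR.ne'
      have : ((T v).card : ℝ) = (((T v).card : ℝ) ^ k) ^ ((1:ℝ)/k) := by
        rw [← Real.rpow_natCast ((T v).card : ℝ) k, ← Real.rpow_mul h0]
        rw [mul_one_div, div_self hkne, Real.rpow_one]
      rw [this]
      calc (((T v).card : ℝ) ^ k) ^ ((1:ℝ)/k)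
          ≤ (P * ∏ i : Fin k, (A i v : ℝ)) ^ ((1:ℝ)/k) :=
            Real.rpow_le_rpow (pow_nonneg h0 _) hpow (by positivity)
        _ = P ^ ((1:ℝ)/k) * ∏ i : Fin k, (A i v : ℝ) ^ ((1:ℝ)/k) := by
            rw [Real.mul_rpow hPnonneg (Finset.prod_nonneg fun i _ => Nat.cast_nonneg _),
              ← Real.finset_prod_rpow _ _ (fun i _ => Nat.cast_nonneg _)]
            rw [← Real.finset_prod_rpow _ _ (fun i _ => Nat.cast_nonneg _)]
    -- sum up using Hölder
    have hsum : (S.card : ℝ) ≤ P ^ ((1:ℝ)/k) * ∏ i : Fin k, (B i : ℝ) ^ ((1:ℝ)/k) := by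
      have hcard : ((Finset.univ : Finset (Fin k)).card : ℝ) = k := by
        simp
      have hholder := holder_unif (Finset.univ : Finset V) (Finset.univ : Finset (Fin k))
        (Finset.univ_nonempty_iff.2 (Fin.pos_iff_nonempty.1 hk))
        (fun i v => (A i v : ℝ)) (fun i _ v _ => Nat.cast_nonneg _)
      rw [Finset.card_univ, Fintype.card_fin] at hholder
      calc (S.card : ℝ) = ∑ v : V, ((T v).card : ℝ) := by rw [F1]; push_cast; ring
        _ ≤ ∑ v : V, P ^ ((1:ℝ)/k) * ∏ i : Fin k, (A i v : ℝ) ^ ((1:ℝ)/k) :=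
            Finset.sum_le_sum fun v _ => hc v
        _ = P ^ ((1:ℝ)/k) * ∑ v : V, ∏ i : Fin k, (A i v : ℝ) ^ ((1:ℝ)/k) := by
            rw [Finset.mul_sum]
        _ ≤ P ^ ((1:ℝ)/k) * ∏ i : Fin k, (∑ v : V, (A i v : ℝ)) ^ ((1:ℝ)/k) := by
            refine mul_le_mul_of_nonneg_left hholder (Real.rpow_nonneg hPnonneg _)
        _ = P ^ ((1:ℝ)/k) * ∏ i : Fin k, (B i : ℝ) ^ ((1:ℝ)/k) := by
            congr 1
            refine Finset.prod_congr rfl fun i _ => ?_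
            rw [F5 i]; push_cast; ring_nf
    -- conclude
    have hgoal : (S.card : ℝ) ^ k ≤ P * ∏ i : Fin k, (B i : ℝ) := by
      have hexp : ∀ x : ℝ, 0 ≤ x → (x ^ ((1:ℝ)/k)) ^ k = x := by
        intro x hx
        rw [← Real.rpow_natCast (x ^ ((1:ℝ)/k)) k, ← Real.rpow_mul hx,
          one_div_mul_cancel hkR.ne', Real.rpow_one]
      have h := pow_le_pow_left₀ (Nat.cast_nonneg _) hsum k
      refine h.trans_eq ?_
      rw [mul_pow, ← Finset.prod_pow, hexp P hPnonneg]
      exact congrArg _ (Finset.prod_congr rfl fun i _ => hexp _ (Nat.cast_nonneg _))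
    -- rewrite RHS using the split of pairsF (k+1)
    have hsplit : ∏ p ∈ pairsF (k+1), ((projF p.1 p.2 S).card : ℝ)
        = P * ∏ i : Fin k, (B i : ℝ) := by
      have hdisj : Disjoint ((pairsF k).image (fun p => (p.1.castSucc, p.2.castSucc)))
          (Finset.univ.image (fun i : Fin k => (i.castSucc, Fin.last k))) := by
        rw [Finset.disjoint_left]
        rintro p hp hq
        simp only [Finset.mem_image] at hp hq
        obtain ⟨q, _, rfl⟩ := hp
        obtain ⟨i, _, hi⟩ := hq
        have h2 : Fin.last k = q.2.castSucc := congrArg Prod.snd hi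
        exact absurd h2.symm (Fin.castSucc_lt_last q.2).ne
      have hinj1 : ∀ p ∈ pairsF k, ∀ q ∈ pairsF k,
          ((p.1.castSucc, p.2.castSucc) : Fin (k+1) × Fin (k+1))
            = (q.1.castSucc, q.2.castSucc) → p = q := by
        intro p _ q _ h
        have h1 := congrArg Prod.fst h
        have h2 := congrArg Prod.snd h
        simp only at h1 h2
        exact Prod.ext (Fin.castSucc_injective k h1) (Fin.castSucc_injective k h2)
      have hinj2 : ∀ i ∈ (Finset.univ : Finset (Fin k)), ∀ j ∈ (Finset.univ : Finset (Fin k)),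
          ((i.castSucc, Fin.last k) : Fin (k+1) × Fin (k+1)) = (j.castSucc, Fin.last k)
            → i = j := by
        intro i _ j _ h
        exact Fin.castSucc_injective k (congrArg Prod.fst h)
      rw [pairsF_succ_split k, Finset.prod_union hdisj, Finset.prod_image hinj1,
        Finset.prod_image hinj2]
    rw [hsplit]
    simpa using hgoal

/-- a k-partite graph G satisfies e(G) ≥ C(k,2)·K_k(G)^{2/k}. -/
theorem stmt8 {V : Type} [Fintype V] [DecidableEq V] (k : ℕ) (G : SimpleGraph V)
    [DecidableRel G.Adj] (P : V → Fin k) (hP : ∀ u v, G.Adj u v → P u ≠ P v) :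
    (k.choose 2 : ℝ) * ((G.cliqueFinset k).card : ℝ) ^ ((2 : ℝ) / (k : ℝ))
      ≤ (G.edgeFinset.card : ℝ) := by
  rcases lt_or_ge k 2 with hk2 | hk2
  · rw [Nat.choose_eq_zero_of_lt hk2]
    simp only [Nat.cast_zero, zero_mul]
    exact Nat.cast_nonneg _
  rcases Nat.eq_zero_or_pos (G.cliqueFinset k).card with hK0 | hKpos
  · rw [hK0]
    have h2k : (2:ℝ)/(k:ℝ) ≠ 0 := by
      have : (0:ℝ) < k := by exact_mod_cast (by omega : 0 < k)
      positivity
    rw [Nat.cast_zero, Real.zero_rpow h2k, mul_zero]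
    exact Nat.cast_nonneg _
  -- main case
  classical
  set S : Finset (Fin k → V) := Finset.univ.filter
    (fun f => (∀ i, P (f i) = i) ∧ ∀ i j, i ≠ j → G.Adj (f i) (f j)) with hS
  have hmemS : ∀ f ∈ S, (∀ i, P (f i) = i) ∧ ∀ i j, i ≠ j → G.Adj (f i) (f j) := by
    intro f hf
    rw [hS, Finset.mem_filter] at hf
    exact hf.2
  -- M1 : clique count is at most |S|
  have M1 : (G.cliqueFinset k).card ≤ S.card := by
    have hsub : G.cliqueFinset k ⊆ S.image (fun f => Finset.image f Finset.univ) := by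
      intro s hs
      rw [SimpleGraph.mem_cliqueFinset_iff] at hs
      have hinj : ∀ u ∈ s, ∀ v ∈ s, P u = P v → u = v := by
        intro u hu v hv huv
        by_contra hne
        exact hP u v (hs.1 hu hv hne) huv
      have hcard : (s.image P).card = k := by
        rw [Finset.card_image_of_injOn hinj, hs.2]
      have huniv : s.image P = Finset.univ :=
        Finset.eq_univ_of_card _ (by rw [hcard, Fintype.card_fin])
      have hex : ∀ i : Fin k, ∃ v, v ∈ s ∧ P v = i := by
        intro i
        have : i ∈ s.image P := huniv ▸ Finset.mem_univ i
        obtain ⟨v, hv, hvi⟩ := Finset.mem_image.1 this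
        exact ⟨v, hv, hvi⟩
      set f : Fin k → V := fun i => (hex i).choose with hf
      have hfs : ∀ i, f i ∈ s := fun i => (hex i).choose_spec.1
      have hfP : ∀ i, P (f i) = i := fun i => (hex i).choose_spec.2
      have hfS : f ∈ S := by
        rw [hS, Finset.mem_filter]
        refine ⟨Finset.mem_univ _, hfP, fun i j hij => ?_⟩
        refine hs.1 (hfs i) (hfs j) ?_
        intro h
        exact hij (by rw [← hfP i, ← hfP j, h])
      refine Finset.mem_image.2 ⟨f, hfS, ?_⟩
      apply Finset.Subset.antisymm
      · intro u hu
        obtain ⟨i, _, rfl⟩ := Finset.mem_image.1 hu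
        exact hfs i
      · intro v hv
        refine Finset.mem_image.2 ⟨P v, Finset.mem_univ _, ?_⟩
        exact hinj _ (hfs (P v)) _ hv (hfP (P v))
    calc (G.cliqueFinset k).card ≤ (S.image (fun f => Finset.image f Finset.univ)).card :=
          Finset.card_le_card hsub
      _ ≤ S.card := Finset.card_image_le
  -- M3 : sum of projection sizes at most the number of edges
  have hprojmem : ∀ p : Fin k × Fin k, p.1 ≠ p.2 → ∀ q ∈ projF p.1 p.2 S,
      P q.1 = p.1 ∧ P q.2 = p.2 ∧ G.Adj q.1 q.2 := by
    intro p hp q hq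
    obtain ⟨f, hf, rfl⟩ := Finset.mem_image.1 hq
    obtain ⟨h1, h2⟩ := hmemS f hf
    exact ⟨h1 p.1, h1 p.2, h2 p.1 p.2 hp⟩
  have M3 : ∑ p ∈ pairsF k, (projF p.1 p.2 S).card ≤ G.edgeFinset.card := by
    have hdisj : ∀ p ∈ pairsF k, ∀ q ∈ pairsF k, p ≠ q →
        Disjoint (projF p.1 p.2 S) (projF q.1 q.2 S) := by
      intro p hp q hq hpq
      rw [Finset.disjoint_left]
      intro x hxp hxq
      obtain ⟨ha, hb, _⟩ := hprojmem p (mem_pairsF.1 hp).ne x hxp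
      obtain ⟨hc, hd, _⟩ := hprojmem q (mem_pairsF.1 hq).ne x hxq
      exact hpq (Prod.ext (ha ▸ hc.symm ▸ rfl) (hb ▸ hd.symm ▸ rfl))
    rw [← Finset.card_biUnion hdisj]
    apply Finset.card_le_card_of_injOn (fun q => s(q.1, q.2))
    · intro q hq
      obtain ⟨p, hp, hqp⟩ := Finset.mem_biUnion.1 hq
      obtain ⟨_, _, hadj⟩ := hprojmem p (mem_pairsF.1 hp).ne q hqp
      rw [Finset.mem_coe, SimpleGraph.mem_edgeFinset]
      exact hadj
    · intro q hq q' hq' heq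
      obtain ⟨p, hp, hqp⟩ := Finset.mem_biUnion.1 hq
      obtain ⟨p', hp', hqp'⟩ := Finset.mem_biUnion.1 hq'
      obtain ⟨ha, hb, _⟩ := hprojmem p (mem_pairsF.1 hp).ne q hqp
      obtain ⟨hc, hd, _⟩ := hprojmem p' (mem_pairsF.1 hp').ne q' hqp'
      rw [Sym2.eq_iff] at heq
      rcases heq with ⟨h1, h2⟩ | ⟨h1, h2⟩
      · exact Prod.ext h1 h2
      · exfalso
        have hlt : P q.1 < P q.2 := by rw [ha, hb]; exact mem_pairsF.1 hp
        have hlt' : P q'.1 < P q'.2 := by rw [hc, hd]; exact mem_pairsF.1 hp'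
        rw [h1, h2] at hlt
        exact absurd hlt' (not_lt.2 hlt.le)
  -- M4 : put things together
  set K : ℝ := ((G.cliqueFinset k).card : ℝ) with hK
  set Pi : ℝ := ∏ p ∈ pairsF k, ((projF p.1 p.2 S).card : ℝ) with hPi
  have hKnn : (0:ℝ) ≤ K := Nat.cast_nonneg _
  have hPinn : (0:ℝ) ≤ Pi := Finset.prod_nonneg fun p _ => Nat.cast_nonneg _
  have hM2 : K ^ (k-1) ≤ Pi := by
    refine le_trans ?_ (shearer k S)
    exact pow_le_pow_left₀ hKnn (by rw [hK]; exact_mod_cast M1) _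
  have hC : (0:ℝ) < (k.choose 2 : ℝ) := by
    exact_mod_cast Nat.choose_pos hk2
  have hCeq : (k.choose 2 : ℝ) * 2 = (k:ℝ) * ((k:ℝ) - 1) := by
    have := two_mul_choose_two k
    have hk1 : (1:ℕ) ≤ k := by omega
    have h2 : ((2 * k.choose 2 : ℕ) : ℝ) = ((k * (k-1) : ℕ) : ℝ) := by rw [this]
    push_cast [Nat.cast_sub hk1] at h2
    linarith
  have hkpos : (0:ℝ) < (k:ℝ) := by exact_mod_cast (by omega : 0 < k)
  have hk1pos : (0:ℝ) < (k:ℝ) - 1 := by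
    have : (2:ℝ) ≤ (k:ℝ) := by exact_mod_cast hk2
    linarith
  set e : ℝ := 2 / ((k:ℝ) * ((k:ℝ) - 1)) with he
  have hepos : (0:ℝ) < e := by positivity
  have heC : e = 1 / (k.choose 2 : ℝ) := by
    rw [he, eq_div_iff hC.ne']
    field_simp
    linarith [hCeq]
  -- K ^ (2/k) = (K^(k-1)) ^ e
  have hstep1 : K ^ ((2:ℝ)/(k:ℝ)) = (K ^ (k-1)) ^ e := by
    rw [← Real.rpow_natCast K (k-1), ← Real.rpow_mul hKnn]
    congr 1
    have : ((k - 1 : ℕ) : ℝ) = (k:ℝ) - 1 := by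
      have hk1 : (1:ℕ) ≤ k := by omega
      push_cast [Nat.cast_sub hk1]; ring
    rw [this, he]
    field_simp
  have hstep2 : (K ^ (k-1)) ^ e ≤ Pi ^ e :=
    Real.rpow_le_rpow (by positivity) hM2 hepos.le
  -- AM-GM
  have hamgm : Pi ^ e ≤ (∑ p ∈ pairsF k, ((projF p.1 p.2 S).card : ℝ)) / (k.choose 2 : ℝ) := by
    rw [heC, hPi, ← Real.finset_prod_rpow _ _ (fun p _ => Nat.cast_nonneg _)]
    have := Real.geom_mean_le_arith_mean_weighted (pairsF k)
      (fun _ => 1 / (k.choose 2 : ℝ)) (fun p => ((projF p.1 p.2 S).card : ℝ))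
      (fun p _ => by positivity)
      (by rw [Finset.sum_const, card_pairsF, nsmul_eq_mul]; field_simp)
      (fun p _ => Nat.cast_nonneg _)
    refine this.trans (le_of_eq ?_)
    rw [Finset.sum_div]
    exact Finset.sum_congr rfl fun p _ => by ring
  have hsumle : (∑ p ∈ pairsF k, ((projF p.1 p.2 S).card : ℝ)) ≤ (G.edgeFinset.card : ℝ) := by
    exact_mod_cast M3
  calc (k.choose 2 : ℝ) * K ^ ((2:ℝ)/(k:ℝ))
      = (k.choose 2 : ℝ) * (K ^ (k-1)) ^ e := by rw [hstep1]
    _ ≤ (k.choose 2 : ℝ) * (Pi ^ e) := by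
        exact mul_le_mul_of_nonneg_left hstep2 hC.le
    _ ≤ (k.choose 2 : ℝ) * ((∑ p ∈ pairsF k, ((projF p.1 p.2 S).card : ℝ)) / (k.choose 2 : ℝ)) :=
        mul_le_mul_of_nonneg_left hamgm hC.le
    _ = ∑ p ∈ pairsF k, ((projF p.1 p.2 S).card : ℝ) := by
        rw [mul_div_assoc']; exact mul_div_cancel_left₀ _ hC.ne'
    _ ≤ (G.edgeFinset.card : ℝ) := hsumle
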